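/- Let Y be a finite nonempty set, π_ref, π_te full-support probability mass functions on Y, r : Y → ℝ, and β₁, β₂ ≥ 0 with β₁ + β₂ > 0. Let π* be the daDPO optimal policy. Then for any two y₁, y₂ ∈ Y, the difference of implicit rewards satisfies r(y₁) − r(y₂) = (β₁+β₂)·log(π*(y₁)/π*(y₂)) − β₁·log(π_ref(y₁)/π_ref(y₂)) − β₂·log(π_te(y₁)/π_te(y₂)), and this expression is independent of the normalizer Z. -/
import Mathlib

open Real Finset

theorem daDPO_reward_difference
    {Y : Type*} [Fintype Y] [Nonempty Y]
    (pref pte : Y → ℝ) (r : Y → ℝ) (β₁ β₂ : ℝ)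
    (hβ₁ : 0 ≤ β₁) (hβ₂ : 0 ≤ β₂) (hβ : 0 < β₁ + β₂)
    (href_pos : ∀ y, 0 < pref y) (href_sum : ∑ y, pref y = 1)
    (hte_pos : ∀ y, 0 < pte y) (hte_sum : ∑ y, pte y = 1)
    (Z : ℝ)
    (hZ : Z = ∑ y, pref y ^ (β₁ / (β₁ + β₂)) * pte y ^ (β₂ / (β₁ + β₂)) *
        Real.exp (r y / (β₁ + β₂)))
    (πs : Y → ℝ)
    (hπs : ∀ y, πs y = (1 / Z) * (pref y ^ (β₁ / (β₁ + β₂)) *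
        pte y ^ (β₂ / (β₁ + β₂)) * Real.exp (r y / (β₁ + β₂)))) :
    ∀ y₁ y₂ : Y,
      r y₁ - r y₂ = (β₁ + β₂) * Real.log (πs y₁ / πs y₂)
        - β₁ * Real.log (pref y₁ / pref y₂)
        - β₂ * Real.log (pte y₁ / pte y₂) := by
  intro y₁ y₂
  have hterm : ∀ y : Y, 0 < pref y ^ (β₁ / (β₁ + β₂)) * pte y ^ (β₂ / (β₁ + β₂)) *
      Real.exp (r y / (β₁ + β₂)) := fun y =>
    mul_pos (mul_pos (Real.rpow_pos_of_pos (href_pos y) _) (Real.rpow_pos_of_pos (hte_pos y) _)) (Real.exp_pos _)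
  have hZpos : 0 < Z := by
    rw [hZ]
    exact Finset.sum_pos (fun y _ => hterm y) Finset.univ_nonempty
  have hπpos : ∀ y, 0 < πs y := fun y => by
    rw [hπs y]; exact mul_pos (by positivity) (hterm y)
  have hlog : ∀ y : Y, Real.log (πs y) = -Real.log Z
      + (β₁ / (β₁ + β₂)) * Real.log (pref y)
      + (β₂ / (β₁ + β₂)) * Real.log (pte y) + r y / (β₁ + β₂) := by
    intro y
    rw [hπs y]
    rw [Real.log_mul (by positivity) (hterm y).ne',
        Real.log_mul (mul_pos (Real.rpow_pos_of_pos (href_pos y) _) (Real.rpow_pos_of_pos (hte_pos y) _)).ne' (Real.exp_pos _).ne',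
        Real.log_mul (Real.rpow_pos_of_pos (href_pos y) _).ne' (Real.rpow_pos_of_pos (hte_pos y) _).ne',
        Real.log_rpow (href_pos y), Real.log_rpow (hte_pos y),
        Real.log_exp, Real.log_div one_ne_zero hZpos.ne', Real.log_one]
    ring
  rw [Real.log_div (hπpos y₁).ne' (hπpos y₂).ne',
      Real.log_div (href_pos y₁).ne' (href_pos y₂).ne',
      Real.log_div (hte_pos y₁).ne' (hte_pos y₂).ne',
      hlog y₁, hlog y₂]
  field_simp
  ring
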